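/- Let O^{n-1} be the boundary of the n-dimensional octahedron, with vertex set {±e₁,…,±e_n}, and for a top-dimensional simplex spanned by {λ₁e₁,…,λ_n e_n} (λ_i ∈ {±1}) let n(λ) be the number of indices with λ_i = -1. For 0 ≤ l ≤ n-1, let B(l) be the union of the (n-1)-simplices with n(λ) ≤ l. Then B(l) collapses onto B(l-1) for each l ≥ 1; in particular B(l) is contractible (a topological ball). -/

import Mathlib

open Finset

/-- An elementary collapse: remove a free pair `(τ, σ)`, where `σ` is the unique
face properly containing `τ` and `dim σ = dim τ + 1`. -/
def ElemCollapse {V : Type*} [DecidableEq V] (K K' : Finset (Finset V)) : Prop :=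
  ∃ τ σ : Finset V, τ ∈ K ∧ σ ∈ K ∧ τ ⊆ σ ∧ τ ≠ σ ∧ σ.card = τ.card + 1 ∧
    (∀ ρ ∈ K, τ ⊆ ρ → ρ = τ ∨ ρ = σ) ∧ K' = (K.erase σ).erase τ

/-- `K` collapses onto `K'`: a finite sequence of elementary collapses. -/
def Collapses {V : Type*} [DecidableEq V] (K K' : Finset (Finset V)) : Prop :=
  Relation.ReflTransGen ElemCollapse K K'

/-- The top-dimensional simplex of `O^{n-1}` corresponding to the sign vector `lam`
(`true ↔ +1`, `false ↔ -1`): the set `{λ₁e₁, …, λ_ne_n}`. -/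
noncomputable def topSimp (n : ℕ) (lam : Fin n → Bool) : Finset (Fin n × Bool) :=
  Finset.univ.image fun i => (i, lam i)

/-- `B(l)`: the union of the closed `(n-1)`-simplices of `O^{n-1}` whose sign
vector has at most `l` minus signs. -/
noncomputable def Bset (n : ℕ) (l : ℕ) : Finset (Finset (Fin n × Bool)) := by
  classical
  exact Finset.univ.powerset.filter fun s => s.Nonempty ∧
    ∃ lam : Fin n → Bool,
      (Finset.univ.filter fun i => lam i = false).card ≤ l ∧ s ⊆ topSimp n lam

section Aux

variable {n : ℕ}

/-- set of indices appearing with a minus sign -/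
def minusSet (s : Finset (Fin n × Bool)) : Finset (Fin n) :=
  Finset.univ.filter fun i => (i, false) ∈ s

/-- `s` is a face of the octahedron boundary: no antipodal pair -/
def Func (s : Finset (Fin n × Bool)) : Prop :=
  ∀ i : Fin n, ¬((i, true) ∈ s ∧ (i, false) ∈ s)

lemma mem_minusSet {s : Finset (Fin n × Bool)} {i : Fin n} :
    i ∈ minusSet s ↔ (i, false) ∈ s := by simp [minusSet]

lemma minusSet_mono {s t : Finset (Fin n × Bool)} (h : s ⊆ t) :
    minusSet s ⊆ minusSet t := by
  intro i hi; rw [mem_minusSet] at hi ⊢; exact h hi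

lemma minusSet_insert_true (s : Finset (Fin n × Bool)) (j : Fin n) :
    minusSet (insert (j, true) s) = minusSet s := by
  ext i; simp [mem_minusSet]

lemma minusSet_erase_true (s : Finset (Fin n × Bool)) (j : Fin n) :
    minusSet (s.erase (j, true)) = minusSet s := by
  ext i; simp [mem_minusSet]

lemma mem_topSimp {lam : Fin n → Bool} {p : Fin n × Bool} :
    p ∈ topSimp n lam ↔ lam p.1 = p.2 := by
  simp only [topSimp, Finset.mem_image, Finset.mem_univ, true_and]
  constructor
  · rintro ⟨i, rfl⟩; rfl
  · intro h; exact ⟨p.1, Prod.ext rfl h⟩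

lemma mem_Bset {l : ℕ} {s : Finset (Fin n × Bool)} :
    s ∈ Bset n l ↔ s.Nonempty ∧ Func s ∧ (minusSet s).card ≤ l := by
  classical
  simp only [Bset, Finset.mem_filter, Finset.mem_powerset, Finset.subset_univ, true_and]
  constructor
  · rintro ⟨hne, lam, hcard, hsub⟩
    refine ⟨hne, ?_, ?_⟩
    · rintro i ⟨h1, h2⟩
      have e1 : lam i = true := mem_topSimp.1 (hsub h1)
      have e2 : lam i = false := mem_topSimp.1 (hsub h2)
      rw [e1] at e2; exact absurd e2 (by simp)
    · refine le_trans (Finset.card_le_card ?_) hcard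
      intro i hi
      rw [mem_minusSet] at hi
      have := mem_topSimp.1 (hsub hi)
      simp only [Finset.mem_filter, Finset.mem_univ, true_and]
      exact this
  · rintro ⟨hne, hf, hcard⟩
    refine ⟨hne, fun i => if (i, false) ∈ s then false else true, ?_, ?_⟩
    · refine le_trans (le_of_eq (congrArg Finset.card ?_)) hcard
      ext i
      simp only [Finset.mem_filter, Finset.mem_univ, true_and, mem_minusSet]
      by_cases h : (i, false) ∈ s <;> simp [h]
    · intro p hp
      rw [mem_topSimp]
      obtain ⟨i, b⟩ := p
      cases b
      · simp only
        rw [if_pos hp]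
      · have : (i, false) ∉ s := fun hc => hf i ⟨hp, hc⟩
        simp only
        rw [if_neg this]

noncomputable def jv (hn : 0 < n) (M : Finset (Fin n)) : Fin n :=
  if h : (Mᶜ : Finset (Fin n)).Nonempty then Mᶜ.min' h else ⟨0, hn⟩

lemma jv_not_mem (hn : 0 < n) {M : Finset (Fin n)} (h : M.card < n) : jv hn M ∉ M := by
  have hne : (Mᶜ : Finset (Fin n)).Nonempty := by
    rw [← Finset.card_pos, Finset.card_compl]
    simp only [Fintype.card_fin]
    omega
  rw [jv, dif_pos hne]
  have := Finset.min'_mem _ hne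
  simpa using this

noncomputable def isz (hn : 0 < n) (s : Finset (Fin n × Bool)) : ℕ :=
  (insert (jv hn (minusSet s), true) s).card

noncomputable def eS (hn : 0 < n) (s : Finset (Fin n × Bool)) : Finset (Fin n × Bool) :=
  s.erase (jv hn (minusSet s), true)

lemma minus_card_le_card (s : Finset (Fin n × Bool)) : (minusSet s).card ≤ s.card := by
  apply Finset.card_le_card_of_injOn (fun i => (i, false))
  · intro i hi; exact mem_minusSet.1 hi
  · intro a _ b _ hab; simpa using hab

lemma minus_lt_isz (hn : 0 < n) (s : Finset (Fin n × Bool)) :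
    (minusSet s).card < isz hn s := by
  set j := jv hn (minusSet s) with hj
  have h1 : (minusSet s).card ≤ ((insert (j, true) s).erase (j, true)).card := by
    apply Finset.card_le_card_of_injOn (fun i => (i, false))
    · intro i hi
      rw [Finset.mem_coe, mem_minusSet] at hi
      rw [Finset.mem_coe, Finset.mem_erase]
      exact ⟨by simp, Finset.mem_insert_of_mem hi⟩
    · intro a _ b _ hab; simpa using hab
  have h2 : ((insert (j, true) s).erase (j, true)).card = (insert (j, true) s).card - 1 :=
    Finset.card_erase_of_mem (Finset.mem_insert_self _ _)
  have h3 : 0 < (insert (j, true) s).card := Finset.card_pos.2 (Finset.insert_nonempty _ _)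
  rw [isz, ← hj]
  omega

lemma Func.mono {s t : Finset (Fin n × Bool)} (h : Func t) (hst : s ⊆ t) : Func s :=
  fun i hi => h i ⟨hst hi.1, hst hi.2⟩

lemma Func.card_le {s : Finset (Fin n × Bool)} (h : Func s) : s.card ≤ n := by
  have h1 : s.card ≤ (Finset.univ : Finset (Fin n)).card := by
    apply Finset.card_le_card_of_injOn Prod.fst (fun p _ => Finset.mem_univ p.1)
    rintro ⟨i, b⟩ hp ⟨i', b'⟩ hq (hpq : i = i')
    subst hpq
    cases b <;> cases b' <;> simp_all
    · exact absurd ⟨hq, hp⟩ (h i)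
    · exact absurd ⟨hp, hq⟩ (h i)
  simpa using h1

lemma Func.insert_true {s : Finset (Fin n × Bool)} {j : Fin n} (h : Func s)
    (hj : (j, false) ∉ s) : Func (insert (j, true) s) := by
  rintro i ⟨h1, h2⟩
  rw [Finset.mem_insert] at h1 h2
  rcases h2 with h2 | h2
  · exact absurd h2 (by simp)
  rcases h1 with h1 | h1
  · obtain ⟨rfl, -⟩ : i = j ∧ True := by simpa using h1
    exact hj h2
  · exact h i ⟨h1, h2⟩

lemma Func.isz_le (hn : 0 < n) {s : Finset (Fin n × Bool)} (h : Func s)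
    (hm : (minusSet s).card < n) : isz hn s ≤ n := by
  have hjm : jv hn (minusSet s) ∉ minusSet s := jv_not_mem hn hm
  rw [mem_minusSet] at hjm
  exact (h.insert_true hjm).card_le

end Aux

section Main

variable {n : ℕ}

noncomputable def Cx (hn : 0 < n) (l k : ℕ) : Finset (Finset (Fin n × Bool)) :=
  (Bset n l).filter fun s => (minusSet s).card < l ∨ isz hn s < k

noncomputable def Sig (hn : 0 < n) (l k : ℕ) : Finset (Finset (Fin n × Bool)) :=
  (Bset n l).filter fun s =>
    (minusSet s).card = l ∧ (jv hn (minusSet s), true) ∈ s ∧ s.card = k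

lemma mem_Cx {hn : 0 < n} {l k : ℕ} {s : Finset (Fin n × Bool)} :
    s ∈ Cx hn l k ↔ s ∈ Bset n l ∧ ((minusSet s).card < l ∨ isz hn s < k) := by
  simp [Cx]

lemma mem_Sig {hn : 0 < n} {l k : ℕ} {s : Finset (Fin n × Bool)} :
    s ∈ Sig hn l k ↔ s ∈ Bset n l ∧
      (minusSet s).card = l ∧ (jv hn (minusSet s), true) ∈ s ∧ s.card = k := by
  simp [Sig, and_assoc]

end Main
section Inner

variable {n : ℕ}

lemma minus_eq_of_superset {l : ℕ} {a ρ : Finset (Fin n × Bool)}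
    (haM : (minusSet a).card = l) (hρl : (minusSet ρ).card ≤ l)
    (hsub : minusSet a ⊆ minusSet ρ) : minusSet ρ = minusSet a :=
  (Finset.eq_of_subset_of_card_le hsub (by omega)).symm

lemma inner_collapse (hn : 0 < n) (l k : ℕ) :
    ∀ S : Finset (Finset (Fin n × Bool)), S ⊆ Sig hn l k →
      Collapses (Cx hn l k ∪ S ∪ S.image (eS hn)) (Cx hn l k) := by
  intro S
  induction S using Finset.induction_on with
  | empty =>
    intro _
    simp only [Finset.image_empty, Finset.union_empty]
    exact Relation.ReflTransGen.refl
  | @insert a S ha IH =>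
    intro hS
    have haSig : a ∈ Sig hn l k := hS (Finset.mem_insert_self a S)
    have hSSig : S ⊆ Sig hn l k := fun x hx => hS (Finset.mem_insert_of_mem hx)
    obtain ⟨haB, haM, haj, haK⟩ := mem_Sig.1 haSig
    set j : Fin n := jv hn (minusSet a) with hjdef
    set τ : Finset (Fin n × Bool) := eS hn a with hτdef
    set C : Finset (Finset (Fin n × Bool)) := Cx hn l k with hCdef
    set K : Finset (Finset (Fin n × Bool)) :=
      C ∪ insert a S ∪ (insert a S).image (eS hn) with hKdef
    -- basic facts
    have f1 : minusSet τ = minusSet a := minusSet_erase_true a j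
    have fjτ : jv hn (minusSet τ) = j := by rw [f1]
    have f2 : insert (j, true) τ = a := Finset.insert_erase haj
    have f4 : (j, true) ∉ τ := Finset.notMem_erase _ _
    have fkpos : 0 < k := by
      rw [← haK]
      exact Finset.card_pos.2 (mem_Bset.1 haB).1
    have fτcard : τ.card = k - 1 := by
      rw [hτdef, eS, ← hjdef, Finset.card_erase_of_mem haj, haK]
    have fisza : isz hn a = k := by
      rw [isz, ← hjdef, Finset.insert_eq_self.2 haj, haK]
    have fiszτ : isz hn τ = k := by
      rw [isz, fjτ, f2, haK]
    -- non-membership facts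
    have haC : a ∉ C := by
      rw [hCdef, mem_Cx]
      rintro ⟨-, h | h⟩ <;> omega
    have hτC : τ ∉ C := by
      rw [hCdef, mem_Cx]
      rintro ⟨-, h | h⟩
      · rw [f1] at h; omega
      · omega
    have sigj : ∀ b ∈ Sig hn l k, (jv hn (minusSet b), true) ∈ b :=
      fun b hb => (mem_Sig.1 hb).2.2.1
    have sigM : ∀ b ∈ Sig hn l k, (minusSet b).card = l :=
      fun b hb => (mem_Sig.1 hb).2.1
    have sigK : ∀ b ∈ Sig hn l k, b.card = k :=
      fun b hb => (mem_Sig.1 hb).2.2.2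
    have eminus : ∀ b : Finset (Fin n × Bool), minusSet (eS hn b) = minusSet b :=
      fun b => minusSet_erase_true b _
    have hτS : τ ∉ Sig hn l k := by
      intro h
      have := sigj τ h
      rw [fjτ] at this
      exact f4 this
    have haimg : ∀ b ∈ Sig hn l k, a ≠ eS hn b := by
      intro b hb he
      have h2 : (jv hn (minusSet b), true) ∉ eS hn b := Finset.notMem_erase _ _
      have h1 : jv hn (minusSet b) = j := by
        rw [← eminus b, ← he, ← hjdef]
      rw [h1, ← he] at h2
      exact h2 haj
    have hτimg : ∀ b ∈ S, τ ≠ eS hn b := by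
      intro b hb he
      have hbSig := hSSig hb
      have h2 : jv hn (minusSet b) = j := by
        rw [← eminus b, ← he, fjτ]
      have h4 : insert ((jv hn (minusSet b)), true) (eS hn b) = b :=
        Finset.insert_erase (sigj b hbSig)
      have h3 : b = a := by rw [← h4, h2, ← he, f2]
      exact ha (h3 ▸ hb)
    have haS' : a ∉ S := ha
    have hτnotS : τ ∉ S := fun h => hτS (hSSig h)
    have hτnotimg : τ ∉ S.image (eS hn) := by
      rw [Finset.mem_image]; rintro ⟨b, hb, he⟩; exact hτimg b hb he.symm
    have hanotimg : a ∉ S.image (eS hn) := by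
      rw [Finset.mem_image]; rintro ⟨b, hb, he⟩; exact haimg b (hSSig hb) he.symm
    have haτ : a ≠ τ := fun h => f4 (h ▸ haj)
    -- the new complex equality
    have hK' : C ∪ S ∪ S.image (eS hn) = (K.erase a).erase τ := by
      ext x
      simp only [hKdef, Finset.mem_erase, Finset.mem_union, Finset.image_insert,
        Finset.mem_insert, ← hτdef]
      constructor
      · rintro ((hx | hx) | hx)
        · exact ⟨fun h => hτC (h ▸ hx), fun h => haC (h ▸ hx), Or.inl (Or.inl hx)⟩
        · exact ⟨fun h => hτnotS (h ▸ hx), fun h => haS' (h ▸ hx),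
            Or.inl (Or.inr (Or.inr hx))⟩
        · exact ⟨fun h => hτnotimg (h ▸ hx), fun h => hanotimg (h ▸ hx),
            Or.inr (Or.inr hx)⟩
      · rintro ⟨hxτ, hxa, ((hx | (rfl | hx)) | (rfl | hx))⟩
        · exact Or.inl (Or.inl hx)
        · exact absurd rfl hxa
        · exact Or.inl (Or.inr hx)
        · exact absurd rfl hxτ
        · exact Or.inr hx
    -- the elementary collapse
    refine Relation.ReflTransGen.head (b := C ∪ S ∪ S.image (eS hn))
      ⟨τ, a, ?_, ?_, Finset.erase_subset _ _, Ne.symm haτ, by omega, ?_, hK'⟩ (IH hSSig)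
    · rw [hKdef]
      exact Finset.mem_union_right _ (Finset.mem_image_of_mem _ (Finset.mem_insert_self a S))
    · rw [hKdef]
      exact Finset.mem_union_left _ (Finset.mem_union_right _ (Finset.mem_insert_self a S))
    · -- uniqueness
      intro ρ hρ hτρ
      have hminus : minusSet a ⊆ minusSet ρ := f1 ▸ minusSet_mono hτρ
      rw [hKdef, Finset.mem_union, Finset.mem_union] at hρ
      rcases hρ with (hρ | hρ) | hρ
      · exfalso
        obtain ⟨hρB, hcond⟩ := mem_Cx.1 hρ
        have hρM : minusSet ρ = minusSet a :=
          minus_eq_of_superset haM (mem_Bset.1 hρB).2.2 hminus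
        have hjρ : jv hn (minusSet ρ) = j := by rw [hρM, ← hjdef]
        have hsub2 : a ⊆ insert (j, true) ρ := by
          rw [← f2]; exact Finset.insert_subset_insert _ hτρ
        have hk2 : k ≤ isz hn ρ := by
          rw [isz, hjρ, ← haK]; exact Finset.card_le_card hsub2
        rcases hcond with h | h
        · rw [hρM] at h; omega
        · omega
      · rw [Finset.mem_insert] at hρ
        rcases hρ with rfl | hρ
        · exact Or.inr rfl
        · right
          have hρSig := hSSig hρ
          have hρM : minusSet ρ = minusSet a :=
            minus_eq_of_superset haM (le_of_eq (sigM ρ hρSig)) hminus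
          have hjρ2 : (j, true) ∈ ρ := by
            have := sigj ρ hρSig; rwa [hρM, ← hjdef] at this
          have hsub2 : a ⊆ ρ := by
            rw [← f2]; exact Finset.insert_subset hjρ2 hτρ
          exact (Finset.eq_of_subset_of_card_le hsub2
            (by rw [sigK ρ hρSig, haK])).symm
      · left
        obtain ⟨b, hb, rfl⟩ := Finset.mem_image.1 hρ
        have hbSig : b ∈ Sig hn l k := hS hb
        have hρM : minusSet (eS hn b) = minusSet a := by
          refine minus_eq_of_superset haM ?_ hminus
          rw [eminus]; exact le_of_eq (sigM b hbSig)
        have hcard : (eS hn b).card = τ.card := by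
          rw [eS, Finset.card_erase_of_mem (sigj b hbSig), sigK b hbSig, fτcard]
        exact (Finset.eq_of_subset_of_card_le hτρ (le_of_eq hcard)).symm

end Inner
section Outer

variable {n : ℕ}

lemma decomp (hn : 0 < n) {l : ℕ} (hl1 : 1 ≤ l) (hln : l < n) (k : ℕ) :
    Cx hn l (k+1) = Cx hn l k ∪ Sig hn l k ∪ (Sig hn l k).image (eS hn) := by
  ext s
  constructor
  · intro hs
    obtain ⟨hsB, hcond⟩ := mem_Cx.1 hs
    obtain ⟨hne, hf, hcard⟩ := mem_Bset.1 hsB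
    by_cases hm : (minusSet s).card < l
    · exact Finset.mem_union_left _ (Finset.mem_union_left _ (mem_Cx.2 ⟨hsB, Or.inl hm⟩))
    have hmeq : (minusSet s).card = l := by omega
    have hiszle : isz hn s ≤ k := by rcases hcond with h | h <;> omega
    by_cases hik : isz hn s < k
    · exact Finset.mem_union_left _ (Finset.mem_union_left _ (mem_Cx.2 ⟨hsB, Or.inr hik⟩))
    have hiszeq : isz hn s = k := by omega
    set j := jv hn (minusSet s) with hj
    by_cases hjs : (j, true) ∈ s
    · refine Finset.mem_union_left _ (Finset.mem_union_right _
        (mem_Sig.2 ⟨hsB, hmeq, hjs, ?_⟩))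
      rw [← hiszeq, isz, ← hj, Finset.insert_eq_self.2 hjs]
    · refine Finset.mem_union_right _ ?_
      set b := insert (j, true) s with hb
      have hjM : j ∉ minusSet s := by
        rw [hj]; exact jv_not_mem hn (by omega)
      have hminusb : minusSet b = minusSet s := minusSet_insert_true s j
      have hjb : jv hn (minusSet b) = j := by rw [hminusb, ← hj]
      have hbB : b ∈ Bset n l := by
        refine mem_Bset.2 ⟨Finset.insert_nonempty _ _, ?_, by rw [hminusb]; omega⟩
        exact hf.insert_true (fun hc => hjM (mem_minusSet.2 hc))
      have hbk : b.card = k := by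
        rw [hb, hj]; exact hiszeq
      have hbSig : b ∈ Sig hn l k :=
        mem_Sig.2 ⟨hbB, by rw [hminusb]; exact hmeq,
          by rw [hjb, hb]; exact Finset.mem_insert_self _ _, hbk⟩
      have hse : s = eS hn b := by
        rw [eS, hjb, hb]; exact (Finset.erase_insert hjs).symm
      exact Finset.mem_image.2 ⟨b, hbSig, hse.symm⟩
  · intro hs
    rcases Finset.mem_union.1 hs with hs | hs
    · rcases Finset.mem_union.1 hs with hs | hs
      · obtain ⟨hB, hc⟩ := mem_Cx.1 hs
        refine mem_Cx.2 ⟨hB, ?_⟩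
        rcases hc with h | h
        · exact Or.inl h
        · exact Or.inr (by omega)
      · obtain ⟨hB, hm, hjs, hk⟩ := mem_Sig.1 hs
        refine mem_Cx.2 ⟨hB, Or.inr ?_⟩
        rw [isz, Finset.insert_eq_self.2 hjs, hk]
        omega
    · obtain ⟨b, hb, rfl⟩ := Finset.mem_image.1 hs
      obtain ⟨hB, hm, hjb, hk⟩ := mem_Sig.1 hb
      have hminus : minusSet (eS hn b) = minusSet b := minusSet_erase_true b _
      refine mem_Cx.2 ⟨?_, Or.inr ?_⟩
      · obtain ⟨hne, hf, hc⟩ := mem_Bset.1 hB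
        refine mem_Bset.2 ⟨?_, hf.mono (Finset.erase_subset _ _), by rw [hminus]; omega⟩
        have hmne : (minusSet (eS hn b)).Nonempty := by
          rw [hminus, ← Finset.card_pos, hm]; omega
        obtain ⟨i, hi⟩ := hmne
        exact ⟨(i, false), mem_minusSet.1 hi⟩
      · rw [isz, hminus, eS, Finset.insert_erase hjb, hk]
        omega

lemma Cx_top (hn : 0 < n) {l : ℕ} (hln : l < n) : Cx hn l (n+1) = Bset n l := by
  ext s
  rw [mem_Cx]
  constructor
  · exact fun h => h.1
  · intro h
    refine ⟨h, Or.inr ?_⟩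
    obtain ⟨-, hf, hc⟩ := mem_Bset.1 h
    have := hf.isz_le hn (by omega)
    omega

lemma Cx_bot (hn : 0 < n) {l : ℕ} (hl1 : 1 ≤ l) : Cx hn l (l+1) = Bset n (l-1) := by
  ext s
  rw [mem_Cx, mem_Bset, mem_Bset]
  constructor
  · rintro ⟨⟨hne, hf, hc⟩, hcond⟩
    refine ⟨hne, hf, ?_⟩
    rcases hcond with h | h
    · omega
    · have := minus_lt_isz hn s; omega
  · rintro ⟨hne, hf, hc⟩
    exact ⟨⟨hne, hf, by omega⟩, Or.inl (by omega)⟩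

lemma collapse_step (hn : 0 < n) {l : ℕ} (hl1 : 1 ≤ l) (hln : l < n) (k : ℕ) :
    Collapses (Cx hn l (k+1)) (Cx hn l k) := by
  rw [decomp hn hl1 hln k]
  exact inner_collapse hn l k _ subset_rfl

lemma collapse_chain (hn : 0 < n) {l : ℕ} (hl1 : 1 ≤ l) (hln : l < n) :
    ∀ m : ℕ, Collapses (Cx hn l (l+1+m)) (Cx hn l (l+1))
  | 0 => Relation.ReflTransGen.refl
  | (m+1) =>
    Relation.ReflTransGen.trans (collapse_step hn hl1 hln (l+1+m))
      (collapse_chain hn hl1 hln m)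

end Outer

/-- In the boundary of the `n`-octahedron, `B(l)` collapses onto `B(l-1)` for
`1 ≤ l ≤ n-1`; in particular each `B(l)` collapses onto `B(0)`, which is a single
closed `(n-1)`-simplex (so `B(l)` is a ball). -/
theorem Bset_collapses (n : ℕ) (hn : 1 ≤ n) :
    (∀ l : ℕ, 1 ≤ l → l ≤ n - 1 → Collapses (Bset n l) (Bset n (l - 1))) ∧
    (∀ l : ℕ, l ≤ n - 1 → Collapses (Bset n l) (Bset n 0)) ∧
    (∃ lam : Fin n → Bool, Bset n 0 = (topSimp n lam).powerset.erase ∅) := by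
  have hpos : 0 < n := hn
  have part1 : ∀ l : ℕ, 1 ≤ l → l ≤ n - 1 → Collapses (Bset n l) (Bset n (l - 1)) := by
    intro l hl1 hl2
    have hln : l < n := by omega
    have h := collapse_chain hpos hl1 hln (n - l)
    have e : l + 1 + (n - l) = n + 1 := by omega
    rw [e, Cx_top hpos hln, Cx_bot hpos hl1] at h
    exact h
  refine ⟨part1, ?_, ?_⟩
  · intro l
    induction l with
    | zero => intro _; exact Relation.ReflTransGen.refl
    | succ m ih =>
      intro h
      have h1 := part1 (m+1) (by omega) h
      have h2 : m + 1 - 1 = m := rfl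
      rw [h2] at h1
      exact Relation.ReflTransGen.trans h1 (ih (by omega))
  · refine ⟨fun _ => true, ?_⟩
    ext s
    rw [Finset.mem_erase, Finset.mem_powerset]
    classical
    simp only [Bset, Finset.mem_filter, Finset.mem_powerset, Finset.subset_univ, true_and]
    constructor
    · rintro ⟨hne, lam, hcard, hsub⟩
      refine ⟨hne.ne_empty, ?_⟩
      have hlam : ∀ i, lam i = true := by
        intro i
        cases h2 : lam i
        · exfalso
          have hi : i ∈ Finset.univ.filter fun i => lam i = false := by simp [h2]
          have := Finset.card_pos.2 ⟨i, hi⟩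
          omega
        · rfl
      have hl : lam = fun _ => true := funext hlam
      rwa [hl] at hsub
    · rintro ⟨hne, hsub⟩
      refine ⟨Finset.nonempty_of_ne_empty hne, fun _ => true, ?_, hsub⟩
      simp
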